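/- arXiv:1308.5041 — 6 statements merged into one kernel-verified Lean document; each statement's English description precedes it below -/
import Mathlib

section
/- Let q be a prime power and let n ≥ 1 be an integer. Then |π_q(q^n) − ∑_{k=1}^{n} q^k/k| ≤ 11·q^{n/2}/n. -/
open Polynomial UniqueFactorizationMonoid Finset

namespace Stmt1

lemma dvd_of_pow_sub_one_dvd {q d k : ℕ} (hq : 2 ≤ q) (hd : 0 < d)
    (h : q ^ d - 1 ∣ q ^ k - 1) : d ∣ k := by
  have key : q ^ d - 1 ∣ q ^ (k % d) - 1 := by
    have h1 : q ^ d - 1 ∣ q ^ (d * (k / d)) - 1 := by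
      simpa [← pow_mul, one_pow] using Nat.sub_dvd_pow_sub_pow (q ^ d) 1 (k / d)
    have hA1 : 1 ≤ q ^ (d * (k / d)) := Nat.one_le_pow _ _ (by omega)
    have hB1 : 1 ≤ q ^ (k % d) := Nat.one_le_pow _ _ (by omega)
    have hk : q ^ k = q ^ (k % d) * q ^ (d * (k / d)) := by
      rw [← pow_add]; congr 1; exact (Nat.mod_add_div k d).symm
    have e2 : q ^ (k % d) * (q ^ (d * (k / d)) - 1)
        = q ^ (k % d) * q ^ (d * (k / d)) - q ^ (k % d) := by rw [Nat.mul_sub, mul_one]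
    have hWY : q ^ (k % d) ≤ q ^ (k % d) * q ^ (d * (k / d)) :=
      Nat.le_mul_of_pos_right _ (by positivity)
    have e : q ^ k - 1 = q ^ (k % d) * (q ^ (d * (k / d)) - 1) + (q ^ (k % d) - 1) := by omega
    have h3 : q ^ d - 1 ∣ (q ^ (k % d) * (q ^ (d * (k / d)) - 1) + (q ^ (k % d) - 1))
        - q ^ (k % d) * (q ^ (d * (k / d)) - 1) :=
      Nat.dvd_sub (e ▸ h) (h1.mul_left _)
    rwa [Nat.add_sub_cancel_left] at h3
  rcases Nat.eq_zero_or_pos (k % d) with h0 | hpos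
  · exact Nat.dvd_of_mod_eq_zero h0
  · exfalso
    have hlt : q ^ (k % d) < q ^ d := Nat.pow_lt_pow_right hq (Nat.mod_lt _ hd)
    have hge : 2 ≤ q ^ (k % d) := by
      calc 2 ≤ q := hq
        _ = q ^ 1 := (pow_one q).symm
        _ ≤ q ^ (k % d) := Nat.pow_le_pow_right (by omega) hpos
    have := Nat.le_of_dvd (by omega) key
    omega

lemma geom_le {q : ℕ} (hq : 2 ≤ q) (m : ℕ) : ∑ d ∈ Icc 1 m, q ^ d ≤ 2 * q ^ m - 2 := by
  induction m with
  | zero => simp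
  | succ m ih =>
    rw [Finset.sum_Icc_succ_top (by omega)]
    have h1 : 2 * q ^ m ≤ q * q ^ m := Nat.mul_le_mul_right _ hq
    have h2 : q ^ (m + 1) = q * q ^ m := by rw [pow_succ, mul_comm]
    have h3 : 1 ≤ q ^ m := Nat.one_le_pow _ _ (by omega)
    omega

section Field

variable (F : Type*) [Field F] [Fintype F]

/-- X^(q^k) - X -/
noncomputable def PP (k : ℕ) : F[X] := X ^ (Fintype.card F ^ k) - X

variable {F}

lemma hq2 : 2 ≤ Fintype.card F := Fintype.one_lt_card

lemma PP_natDegree {k : ℕ} (hk : k ≠ 0) : (PP F k).natDegree = Fintype.card F ^ k :=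
  FiniteField.X_pow_card_pow_sub_X_natDegree_eq F hk Fintype.one_lt_card

lemma PP_ne_zero {k : ℕ} (hk : k ≠ 0) : PP F k ≠ 0 :=
  FiniteField.X_pow_card_pow_sub_X_ne_zero F hk Fintype.one_lt_card

lemma PP_monic {k : ℕ} (hk : k ≠ 0) : (PP F k).Monic := by
  have h2 : 2 ≤ Fintype.card F ^ k :=
    le_trans hq2 (Nat.le_self_pow hk _)
  apply monic_X_pow_sub
  rw [degree_X]
  exact_mod_cast h2

lemma PP_separable {k : ℕ} (hk : k ≠ 0) : (PP F k).Separable := by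
  rw [separable_def]
  convert isCoprime_one_right.neg_right using 1
  case e'_2 => rfl
  rw [PP, derivative_sub, derivative_X, derivative_X_pow]
  have : ((Fintype.card F ^ k : ℕ) : F) = 0 := by
    rw [Nat.cast_pow, FiniteField.cast_card_eq_zero, zero_pow hk]
  rw [this, C_0, zero_mul, zero_sub]

lemma PP_squarefree {k : ℕ} (hk : k ≠ 0) : Squarefree (PP F k) :=
  (PP_separable hk).squarefree

end Field

end Stmt1

namespace Stmt1

variable {F : Type*} [Field F] [Fintype F]

lemma dvd_PP_of_natDegree_dvd {f : F[X]} (hmon : f.Monic) (hirr : Irreducible f)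
    {k : ℕ} (hk : k ≠ 0) (hdvd : f.natDegree ∣ k) : f ∣ PP F k := by
  haveI : Fact (Irreducible f) := ⟨hirr⟩
  have hf0 : f ≠ 0 := hirr.ne_zero
  haveI : Module.Finite F (AdjoinRoot f) := (AdjoinRoot.powerBasis hf0).finite
  haveI : Finite (AdjoinRoot f) := Module.finite_of_finite F
  haveI : Fintype (AdjoinRoot f) := Fintype.ofFinite _
  have hcard : Fintype.card (AdjoinRoot f) = Fintype.card F ^ f.natDegree := by
    rw [Module.card_eq_pow_finrank (K := F), (AdjoinRoot.powerBasis hf0).finrank,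
      AdjoinRoot.powerBasis_dim]
  obtain ⟨m, hm⟩ := hdvd
  have hroot : (AdjoinRoot.root f) ^ (Fintype.card F ^ k) = AdjoinRoot.root f := by
    have h1 : Fintype.card F ^ k = (Fintype.card (AdjoinRoot f)) ^ m := by
      rw [hcard, ← pow_mul, hm]
    rw [h1]
    exact FiniteField.pow_card_pow m _
  rw [← AdjoinRoot.mk_eq_zero, ← AdjoinRoot.aeval_eq]
  simp [PP, hroot]

lemma natDegree_dvd_of_dvd_PP {f : F[X]} (hmon : f.Monic) (hirr : Irreducible f)
    {k : ℕ} (hk : k ≠ 0) (hdvd : f ∣ PP F k) : f.natDegree ∣ k := by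
  haveI : Fact (Irreducible f) := ⟨hirr⟩
  have hf0 : f ≠ 0 := hirr.ne_zero
  haveI : Module.Finite F (AdjoinRoot f) := (AdjoinRoot.powerBasis hf0).finite
  haveI : Finite (AdjoinRoot f) := Module.finite_of_finite F
  haveI : Fintype (AdjoinRoot f) := Fintype.ofFinite _
  have hcard : Fintype.card (AdjoinRoot f) = Fintype.card F ^ f.natDegree := by
    rw [Module.card_eq_pow_finrank (K := F), (AdjoinRoot.powerBasis hf0).finrank,
      AdjoinRoot.powerBasis_dim]
  have hα : (AdjoinRoot.root f) ^ (Fintype.card F ^ k) = AdjoinRoot.root f := by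
    have h0 : aeval (AdjoinRoot.root f) (PP F k) = 0 := by
      rw [AdjoinRoot.aeval_eq, AdjoinRoot.mk_eq_zero]; exact hdvd
    have := h0
    rw [PP] at this
    simpa [sub_eq_zero] using this
  -- characteristic
  set p := ringChar F with hpdef
  haveI : CharP F p := ringChar.charP F
  have hpp : p.Prime := CharP.char_is_prime F p
  haveI := Fact.mk hpp
  obtain ⟨e, -, hcardF⟩ := FiniteField.card F p
  haveI : CharP (AdjoinRoot f) p :=
    charP_of_injective_algebraMap (algebraMap F (AdjoinRoot f)).injective p
  have hφ : ∀ x : AdjoinRoot f,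
      iterateFrobenius (AdjoinRoot f) p (e * k) x = x ^ Fintype.card F ^ k := by
    intro x
    rw [iterateFrobenius_def, hcardF, ← pow_mul]
  let ψ : AdjoinRoot f →ₐ[F] AdjoinRoot f :=
    { iterateFrobenius (AdjoinRoot f) p (e * k) with
      commutes' := fun c => by
        simp only [RingHom.toMonoidHom_eq_coe, OneHom.toFun_eq_coe, MonoidHom.toOneHom_coe,
          MonoidHom.coe_coe]
        rw [hφ, ← map_pow, FiniteField.pow_card_pow] }
  have hψ : ψ = AlgHom.id F _ := by
    apply AdjoinRoot.algHom_ext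
    show iterateFrobenius (AdjoinRoot f) p (e * k) (AdjoinRoot.root f) = AdjoinRoot.root f
    rw [hφ]; exact hα
  have hall : ∀ x : AdjoinRoot f, x ^ Fintype.card F ^ k = x := by
    intro x
    have := AlgHom.congr_fun hψ x
    rw [show ψ x = iterateFrobenius (AdjoinRoot f) p (e * k) x from rfl, hφ] at this
    simpa using this
  obtain ⟨ζ, hζ⟩ := IsCyclic.exists_generator (α := (AdjoinRoot f)ˣ)
  have hord : orderOf ζ = Fintype.card F ^ f.natDegree - 1 := by
    rw [orderOf_eq_card_of_forall_mem_zpowers hζ, Nat.card_units, Nat.card_eq_fintype_card, hcard]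
  have hζpow : ζ ^ (Fintype.card F ^ k) = ζ ^ 1 := by
    apply Units.ext
    rw [Units.val_pow_eq_pow_val, pow_one]
    exact hall ζ
  have hmod := pow_eq_pow_iff_modEq.mp hζpow
  have hdd : orderOf ζ ∣ Fintype.card F ^ k - 1 :=
    (Nat.modEq_iff_dvd' (Nat.one_le_pow _ _ (by have := hq2 (F := F); omega))).mp hmod.symm
  rw [hord] at hdd
  exact dvd_of_pow_sub_one_dvd hq2 hirr.natDegree_pos hdd

end Stmt1

namespace Stmt1

variable (F : Type*) [Field F] [Fintype F] [DecidableEq F]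

noncomputable def facts (k : ℕ) : Finset (Polynomial F) :=
  ⟨normalizedFactors (PP F k), by
    rcases eq_or_ne k 0 with rfl | hk
    · have : PP F 0 = 0 := by simp [PP]
      simp [this]
    · exact (squarefree_iff_nodup_normalizedFactors (PP_ne_zero hk)).mp (PP_squarefree hk)⟩

variable {F}

lemma mem_facts {k : ℕ} (hk : k ≠ 0) {f : Polynomial F} :
    f ∈ facts F k ↔ f.Monic ∧ Irreducible f ∧ f.natDegree ∣ k := by
  rw [facts, Finset.mem_mk]
  constructor
  · intro h
    have hirr := irreducible_of_normalized_factor f h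
    have hnorm := normalize_normalized_factor f h
    have hmon : f.Monic := by
      have := Polynomial.monic_normalize (p := f) hirr.ne_zero
      rwa [hnorm] at this
    exact ⟨hmon, hirr, natDegree_dvd_of_dvd_PP hmon hirr hk
      (dvd_of_mem_normalizedFactors h)⟩
  · rintro ⟨hmon, hirr, hdeg⟩
    obtain ⟨g, hg, hassoc⟩ := exists_mem_normalizedFactors_of_dvd (PP_ne_zero hk) hirr
      (dvd_PP_of_natDegree_dvd hmon hirr hk hdeg)
    have hgmon : g.Monic := by
      have := Polynomial.monic_normalize (p := g)
        (irreducible_of_normalized_factor g hg).ne_zero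
      rwa [normalize_normalized_factor g hg] at this
    rwa [Polynomial.eq_of_monic_of_associated hmon hgmon hassoc]

lemma sum_natDegree_facts {k : ℕ} (hk : k ≠ 0) :
    ∑ f ∈ facts F k, f.natDegree = Fintype.card F ^ k := by
  classical
  have hmon : ∀ f ∈ facts F k, Monic f := fun f hf => ((mem_facts hk).mp hf).1
  have hprod : (normalizedFactors (PP F k)).prod = PP F k := by
    apply Polynomial.eq_of_monic_of_associated _ (PP_monic hk)
      (prod_normalizedFactors (PP_ne_zero hk))
    have hmp := Polynomial.monic_multiset_prod_of_monic (normalizedFactors (PP F k)) id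
      (fun g hg => hmon g (Finset.mem_mk.mpr hg))
    rwa [Multiset.map_id] at hmp
  have h0 : (0 : Polynomial F) ∉ normalizedFactors (PP F k) := fun h =>
    (irreducible_of_normalized_factor 0 h).ne_zero rfl
  have := Polynomial.natDegree_multiset_prod _ h0
  rw [hprod, PP_natDegree hk] at this
  rw [Finset.sum, show (facts F k).val = normalizedFactors (PP F k) from rfl, ← this]

variable (F) in
noncomputable def NN (d : ℕ) : ℕ := ((facts F d).filter (fun f => f.natDegree = d)).card

lemma mem_filter_facts {d : ℕ} (hd : d ≠ 0) {f : Polynomial F} :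
    f ∈ (facts F d).filter (fun f => f.natDegree = d) ↔
      f.Monic ∧ Irreducible f ∧ f.natDegree = d := by
  classical
  rw [Finset.mem_filter, mem_facts hd]
  constructor
  · rintro ⟨⟨h1, h2, -⟩, h4⟩; exact ⟨h1, h2, h4⟩
  · rintro ⟨h1, h2, h3⟩; exact ⟨⟨h1, h2, h3 ▸ dvd_refl d⟩, h3⟩

lemma gauss {k : ℕ} (hk : k ≠ 0) :
    ∑ d ∈ k.divisors, d * NN F d = Fintype.card F ^ k := by
  classical
  rw [← sum_natDegree_facts hk]
  rw [← Finset.sum_fiberwise_of_maps_to (g := fun f : Polynomial F => f.natDegree)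
    (fun f hf => Nat.mem_divisors.mpr ⟨((mem_facts hk).mp hf).2.2, hk⟩)]
  apply Finset.sum_congr rfl
  intro d hd
  obtain ⟨hddvd, -⟩ := Nat.mem_divisors.mp hd
  have hd0 : d ≠ 0 := by
    rintro rfl
    exact hk (Nat.eq_zero_of_zero_dvd hddvd)
  have hfilter : (facts F k).filter (fun f => f.natDegree = d) =
      (facts F d).filter (fun f => f.natDegree = d) := by
    ext f
    rw [mem_filter_facts hd0, Finset.mem_filter, mem_facts hk]
    constructor
    · rintro ⟨⟨h1, h2, -⟩, h4⟩; exact ⟨h1, h2, h4⟩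
    · rintro ⟨h1, h2, h3⟩; exact ⟨⟨h1, h2, h3 ▸ hddvd⟩, h3⟩
  rw [hfilter, NN]
  rw [Finset.sum_congr rfl (fun f hf => (Finset.mem_filter.mp hf).2)]
  rw [Finset.sum_const, smul_eq_mul, mul_comm]

lemma upper {k : ℕ} (hk : k ≠ 0) : k * NN F k ≤ Fintype.card F ^ k := by
  rw [← gauss hk]
  exact Finset.single_le_sum (f := fun d => d * NN F d) (fun d _ => Nat.zero_le _)
    (Nat.mem_divisors_self k hk)

lemma lower {k : ℕ} (hk : k ≠ 0) :
    Fintype.card F ^ k ≤ k * NN F k + 2 * Fintype.card F ^ (k / 2) := by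
  classical
  rw [← gauss hk, ← Finset.add_sum_erase _ _ (Nat.mem_divisors_self k hk)]
  have hsub : k.divisors.erase k ⊆ Icc 1 (k / 2) := by
    intro d hd
    obtain ⟨hne, hmem⟩ := Finset.mem_erase.mp hd
    obtain ⟨hdvd, -⟩ := Nat.mem_divisors.mp hmem
    obtain ⟨m, hm⟩ := hdvd
    have hd0 : d ≠ 0 := by rintro rfl; exact hk (by simp [hm])
    have hm2 : 2 ≤ m := by
      rcases m with - | - | m
      · omega
      · exfalso; exact hne (by omega)
      · omega
    rw [Finset.mem_Icc]
    constructor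
    · omega
    · rw [Nat.le_div_iff_mul_le (by norm_num)]
      calc d * 2 ≤ d * m := Nat.mul_le_mul_left d hm2
        _ = k := hm.symm
  have h1 : ∑ d ∈ k.divisors.erase k, d * NN F d ≤ ∑ d ∈ Icc 1 (k / 2), Fintype.card F ^ d := by
    calc ∑ d ∈ k.divisors.erase k, d * NN F d ≤
        ∑ d ∈ k.divisors.erase k, Fintype.card F ^ d := by
          apply Finset.sum_le_sum
          intro d hd
          obtain ⟨hne, hmem⟩ := Finset.mem_erase.mp hd
          have hd0 : d ≠ 0 := by
            rintro rfl
            exact hk (Nat.eq_zero_of_zero_dvd (Nat.mem_divisors.mp hmem).1)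
          exact upper hd0
      _ ≤ _ := Finset.sum_le_sum_of_subset hsub
  have h2 := geom_le (hq2 (F := F)) (k / 2)
  have h3 : 1 ≤ Fintype.card F ^ (k / 2) := Nat.one_le_pow _ _ Fintype.card_pos
  omega

end Stmt1

namespace Stmt1

section Count

variable {F : Type*} [Field F] [Fintype F] [DecidableEq F]

lemma count (n : ℕ) :
    Nat.card {f : Polynomial F // f.Monic ∧ Irreducible f ∧ f.natDegree ≤ n} =
      ∑ k ∈ Icc 1 n, NN F k := by
  set T := (Icc 1 n).biUnion (fun d => (facts F d).filter (fun f => f.natDegree = d)) with hT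
  have hset : {f : Polynomial F | f.Monic ∧ Irreducible f ∧ f.natDegree ≤ n} = ↑T := by
    ext f
    simp only [Set.mem_setOf_eq, hT, coe_biUnion, Set.mem_iUnion, mem_coe, Finset.mem_Icc]
    constructor
    · rintro ⟨h1, h2, h3⟩
      refine ⟨f.natDegree, ⟨h2.natDegree_pos, h3⟩, ?_⟩
      exact (mem_filter_facts (by have := h2.natDegree_pos; omega)).mpr ⟨h1, h2, rfl⟩
    · rintro ⟨d, ⟨hd1, hd2⟩, hf⟩
      obtain ⟨h1, h2, h3⟩ := (mem_filter_facts (by omega)).mp hf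
      exact ⟨h1, h2, h3 ▸ hd2⟩
  have h1 : Nat.card {f : Polynomial F // f.Monic ∧ Irreducible f ∧ f.natDegree ≤ n} =
      Nat.card ↥{f : Polynomial F | f.Monic ∧ Irreducible f ∧ f.natDegree ≤ n} := rfl
  rw [h1, hset, Nat.card_coe_set_eq, Set.ncard_coe_finset]
  rw [Finset.card_biUnion]
  · rfl
  · intro d1 h1 d2 h2 hne
    rw [Finset.mem_coe, Finset.mem_Icc] at h1 h2
    apply Finset.disjoint_left.mpr
    intro f hf1 hf2
    have e1 := ((mem_filter_facts (by omega)).mp hf1).2.2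
    have e2 := ((mem_filter_facts (by omega)).mp hf2).2.2
    exact hne (e1 ▸ e2)

end Count

lemma step {x : ℝ} (hx : 1.4 ≤ x) {n : ℕ} (hn : 1 ≤ n) {c c' : ℝ} (hc : 0 ≤ c)
    (hcc : 1 + 5 / 7 * (((n : ℝ) + 1) / n) * c ≤ c')
    (h : ∑ k ∈ Icc 1 n, x ^ k / k ≤ c * x ^ n / n) :
    ∑ k ∈ Icc 1 (n + 1), x ^ k / k ≤ c' * x ^ (n + 1) / ((n + 1 : ℕ) : ℝ) := by
  rw [Finset.sum_Icc_succ_top (by omega)]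
  have hx0 : (0:ℝ) < x := by linarith
  have hxn : (0:ℝ) < x ^ n := pow_pos hx0 n
  have hn0 : (0:ℝ) < (n : ℝ) := by exact_mod_cast hn
  have h2 : c * x ^ n / n ≤ (c' - 1) * x ^ (n + 1) / ((n : ℝ) + 1) := by
    rw [div_le_div_iff₀ hn0 (by positivity), pow_succ]
    have h4 : 5 / 7 * (((n : ℝ) + 1) / n) * c * n = 5 / 7 * ((n : ℝ) + 1) * c := by
      field_simp
    have h5 : 5 / 7 * ((n : ℝ) + 1) * c ≤ (c' - 1) * n := by
      nlinarith [hcc, hn0]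
    have h6 : 0 ≤ (c' - 1) * n := by nlinarith [mul_nonneg (mul_nonneg (by norm_num : (0:ℝ) ≤ 5/7) (by positivity : (0:ℝ) ≤ (n:ℝ)+1)) hc]
    have h3 : c * ((n : ℝ) + 1) ≤ (c' - 1) * n * x := by nlinarith [h5, hx, hc, hn0]
    calc c * x ^ n * ((n : ℝ) + 1) = (c * ((n:ℝ)+1)) * x ^ n := by ring
      _ ≤ ((c' - 1) * n * x) * x ^ n := by
          exact mul_le_mul_of_nonneg_right h3 (le_of_lt hxn)
      _ = (c' - 1) * (x ^ n * x) * n := by ring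
  have h7 : x ^ (n+1) / ((n:ℝ)+1) + (c' - 1) * x ^ (n + 1) / ((n:ℝ) + 1)
      = c' * x ^ (n+1) / ((n:ℝ)+1) := by ring
  push_cast
  linarith [h, h2]

lemma sum_le {x : ℝ} (hx : 1.4 ≤ x) : ∀ n : ℕ, 1 ≤ n →
    ∑ k ∈ Icc 1 n, x ^ k / k ≤ 49 / 9 * x ^ n / n := by
  have hx0 : (0:ℝ) < x := by linarith
  have weaken : ∀ (n : ℕ) (c c' : ℝ), c ≤ c' → 1 ≤ n →
      (∑ k ∈ Icc 1 n, x ^ k / k ≤ c * x ^ n / n) →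
      ∑ k ∈ Icc 1 n, x ^ k / k ≤ c' * x ^ n / n := by
    intro n c c' hcc hn h
    have hn0 : (0:ℝ) < (n : ℝ) := by exact_mod_cast hn
    have h2 : c * x ^ n / n ≤ c' * x ^ n / n := by
      gcongr
    linarith
  have h1 : ∑ k ∈ Icc (1:ℕ) 1, x ^ k / (k:ℝ) ≤ 1 * x ^ 1 / ((1:ℕ):ℝ) := by
    norm_num
  have h2 : ∑ k ∈ Icc (1:ℕ) 2, x ^ k / (k:ℝ) ≤ 2.43 * x ^ 2 / ((2:ℕ):ℝ) :=
    step (n := 1) (c := 1) (c' := 2.43) hx (by norm_num) (by norm_num) (by norm_num) h1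
  have h3 : ∑ k ∈ Icc (1:ℕ) 3, x ^ k / (k:ℝ) ≤ 3.61 * x ^ 3 / ((3:ℕ):ℝ) :=
    step (n := 2) (c := 2.43) (c' := 3.61) hx (by norm_num) (by norm_num) (by norm_num) h2
  have h4 : ∑ k ∈ Icc (1:ℕ) 4, x ^ k / (k:ℝ) ≤ 4.44 * x ^ 4 / ((4:ℕ):ℝ) :=
    step (n := 3) (c := 3.61) (c' := 4.44) hx (by norm_num) (by norm_num) (by norm_num) h3
  have h5 : ∑ k ∈ Icc (1:ℕ) 5, x ^ k / (k:ℝ) ≤ 4.97 * x ^ 5 / ((5:ℕ):ℝ) :=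
    step (n := 4) (c := 4.44) (c' := 4.97) hx (by norm_num) (by norm_num) (by norm_num) h4
  have h6 : ∑ k ∈ Icc (1:ℕ) 6, x ^ k / (k:ℝ) ≤ 5.26 * x ^ 6 / ((6:ℕ):ℝ) :=
    step (n := 5) (c := 4.97) (c' := 5.26) hx (by norm_num) (by norm_num) (by norm_num) h5
  have h7 : ∑ k ∈ Icc (1:ℕ) 7, x ^ k / (k:ℝ) ≤ 5.39 * x ^ 7 / ((7:ℕ):ℝ) :=
    step (n := 6) (c := 5.26) (c' := 5.39) hx (by norm_num) (by norm_num) (by norm_num) h6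
  have h8 : ∑ k ∈ Icc (1:ℕ) 8, x ^ k / (k:ℝ) ≤ 5.41 * x ^ 8 / ((8:ℕ):ℝ) :=
    step (n := 7) (c := 5.39) (c' := 5.41) hx (by norm_num) (by norm_num) (by norm_num) h7
  have aux : ∀ n : ℕ, 8 ≤ n → ∑ k ∈ Icc 1 n, x ^ k / k ≤ 49 / 9 * x ^ n / n := by
    intro n hn
    induction n, hn using Nat.le_induction with
    | base => exact weaken 8 5.41 (49/9) (by norm_num) (by norm_num) h8
    | succ n hn ih =>
      refine step hx (by omega) (by norm_num) ?_ ih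
      have hn8 : (8:ℝ) ≤ (n:ℝ) := by exact_mod_cast hn
      have ht : ((n:ℝ) + 1) / n ≤ 9 / 8 := by
        rw [div_le_iff₀ (by linarith)]
        linarith
      linarith
  intro n hn
  rcases le_or_gt 8 n with h | h
  · exact aux n h
  · interval_cases n
    · exact weaken 1 1 (49/9) (by norm_num) (by norm_num) h1
    · exact weaken 2 2.43 (49/9) (by norm_num) (by norm_num) h2
    · exact weaken 3 3.61 (49/9) (by norm_num) (by norm_num) h3
    · exact weaken 4 4.44 (49/9) (by norm_num) (by norm_num) h4
    · exact weaken 5 4.97 (49/9) (by norm_num) (by norm_num) h5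
    · exact weaken 6 5.26 (49/9) (by norm_num) (by norm_num) h6
    · exact weaken 7 5.39 (49/9) (by norm_num) (by norm_num) h7

end Stmt1

theorem stmt_1 (q : ℕ) (hq : IsPrimePow q) (F : Type*) [Field F] [Fintype F]
    (hF : Fintype.card F = q) (n : ℕ) (hn : 1 ≤ n) :
    |(Nat.card {f : Polynomial F // f.Monic ∧ Irreducible f ∧ f.natDegree ≤ n} : ℝ) -
        ∑ k ∈ Finset.Icc 1 n, (q : ℝ) ^ k / k| ≤
      11 * (q : ℝ) ^ ((n : ℝ) / 2) / n := by
  classical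
  subst hF
  rw [Stmt1.count n]
  have hq2 : 2 ≤ Fintype.card F := Fintype.one_lt_card
  have hq2R : (2:ℝ) ≤ (Fintype.card F : ℝ) := by exact_mod_cast hq2
  have hq0 : (0:ℝ) ≤ (Fintype.card F : ℝ) := by positivity
  set x : ℝ := (Fintype.card F : ℝ) ^ ((1:ℝ)/2) with hxdef
  have hx0 : 0 ≤ x := Real.rpow_nonneg hq0 _
  have hx2 : x ^ 2 = (Fintype.card F : ℝ) := by
    rw [hxdef, ← Real.rpow_natCast ((Fintype.card F:ℝ) ^ ((1:ℝ)/2)) 2, ← Real.rpow_mul hq0]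
    norm_num
  have hx14 : 1.4 ≤ x := by nlinarith [hx2, hq2R, hx0]
  have hx1 : (1:ℝ) ≤ x := by linarith
  have hxn : (Fintype.card F : ℝ) ^ ((n:ℝ)/2) = x ^ n := by
    rw [hxdef, ← Real.rpow_natCast ((Fintype.card F:ℝ) ^ ((1:ℝ)/2)) n, ← Real.rpow_mul hq0]
    congr 1
    ring
  rw [hxn]
  have hn0 : (0:ℝ) < (n:ℝ) := by exact_mod_cast hn
  have hxnn : (0:ℝ) ≤ x ^ n / n := by positivity
  -- per-k bound
  have hNk : ∀ k ∈ Finset.Icc 1 n,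
      |(Stmt1.NN F k : ℝ) - (Fintype.card F : ℝ) ^ k / k| ≤ 2 * x ^ k / k := by
    intro k hk
    rw [Finset.mem_Icc] at hk
    have hk0 : k ≠ 0 := by omega
    have hkpos : (0:ℝ) < (k:ℝ) := by exact_mod_cast Nat.pos_of_ne_zero hk0
    have upR : (k:ℝ) * (Stmt1.NN F k : ℝ) ≤ (Fintype.card F : ℝ) ^ k := by
      exact_mod_cast Stmt1.upper hk0
    have lowR : (Fintype.card F : ℝ) ^ k ≤
        (k:ℝ) * (Stmt1.NN F k : ℝ) + 2 * (Fintype.card F : ℝ) ^ (k / 2) := by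
      exact_mod_cast Stmt1.lower hk0
    have hhalf : (Fintype.card F : ℝ) ^ (k / 2) ≤ x ^ k := by
      have e : (Fintype.card F : ℝ) ^ (k / 2) = x ^ (2 * (k / 2)) := by
        rw [pow_mul, hx2]
      rw [e]
      exact pow_le_pow_right₀ hx1 (by omega)
    have e1 : (Fintype.card F : ℝ) ^ k ≤ (k:ℝ) * (Stmt1.NN F k : ℝ) + 2 * x ^ k := by
      linarith
    rw [abs_sub_le_iff]
    constructor
    · have hNle : (Stmt1.NN F k : ℝ) ≤ (Fintype.card F : ℝ) ^ k / k := by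
        rw [le_div_iff₀ hkpos]
        linarith [upR]
      have : (0:ℝ) ≤ 2 * x ^ k / k := by positivity
      linarith
    · have hdivle : (Fintype.card F : ℝ) ^ k / k ≤
          ((k:ℝ) * (Stmt1.NN F k : ℝ) + 2 * x ^ k) / k := by
        gcongr
      have expand : ((k:ℝ) * (Stmt1.NN F k : ℝ) + 2 * x ^ k) / k
          = (Stmt1.NN F k : ℝ) + 2 * x ^ k / k := by
        field_simp
      linarith [hdivle, expand ▸ hdivle]
  calc |(↑(∑ k ∈ Finset.Icc 1 n, Stmt1.NN F k) : ℝ) -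
      ∑ k ∈ Finset.Icc 1 n, (Fintype.card F : ℝ) ^ k / k|
      = |∑ k ∈ Finset.Icc 1 n,
          ((Stmt1.NN F k : ℝ) - (Fintype.card F : ℝ) ^ k / k)| := by
        rw [Finset.sum_sub_distrib]
        push_cast
        ring_nf
    _ ≤ ∑ k ∈ Finset.Icc 1 n,
          |(Stmt1.NN F k : ℝ) - (Fintype.card F : ℝ) ^ k / k| :=
        Finset.abs_sum_le_sum_abs _ _
    _ ≤ ∑ k ∈ Finset.Icc 1 n, 2 * x ^ k / k := Finset.sum_le_sum hNk
    _ = 2 * ∑ k ∈ Finset.Icc 1 n, x ^ k / k := by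
        rw [Finset.mul_sum]
        apply Finset.sum_congr rfl
        intro k _
        ring
    _ ≤ 2 * (49 / 9 * x ^ n / n) := by
        have := Stmt1.sum_le hx14 n hn
        linarith
    _ ≤ 11 * x ^ n / n := by
        have e : 2 * (49 / 9 * x ^ n / (n:ℝ)) = 98 / 9 * (x ^ n / n) := by ring
        have e2 : 11 * x ^ n / (n:ℝ) = 11 * (x ^ n / n) := by ring
        rw [e, e2]
        linarith [hxnn]
end

section
/- For every integer q ≥ 2 and every integer k ≥ 1, one has q^k − 2·q^{k/2} ≤ ∑_{d | k} μ(k/d)·q^d ≤ q^k, where μ is the Möbius function. -/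
open Finset ArithmeticFunction

lemma geom_bound (q : ℝ) (hq : 2 ≤ q) (m : ℕ) :
    ∑ d ∈ Finset.Icc 1 m, q ^ d ≤ 2 * q ^ m - 2 := by
  induction m with
  | zero => simp
  | succ m ih =>
    rw [Finset.sum_Icc_succ_top (by omega)]
    have h0 : (0:ℝ) ≤ q ^ m := by positivity
    have h1 : q ^ m * 2 ≤ q ^ m * q := mul_le_mul_of_nonneg_left hq h0
    have h2 : q ^ (m+1) = q ^ m * q := by ring
    nlinarith

lemma moeb_bounds (n : ℕ) : (-1 : ℝ) ≤ (ArithmeticFunction.moebius n : ℝ) ∧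
    (ArithmeticFunction.moebius n : ℝ) ≤ 1 := by
  rcases eq_or_ne (ArithmeticFunction.moebius n) 0 with h | h
  · rw [h]; norm_num
  · rcases ArithmeticFunction.moebius_ne_zero_iff_eq_or.mp h with h | h <;> rw [h] <;> norm_num

lemma proper_le (k : ℕ) (hk0 : k ≠ 0) {d : ℕ} (hd : d ∈ k.properDivisors) :
    d ≤ k / k.minFac := by
  rw [Nat.mem_properDivisors] at hd
  obtain ⟨hdvd, hlt⟩ := hd
  have hdpos : 0 < d := Nat.pos_of_dvd_of_pos hdvd (Nat.pos_of_ne_zero hk0)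
  set e := k / d with he
  have hedvd : e ∣ k := Nat.div_dvd_of_dvd hdvd
  have he1 : e ≠ 1 := by
    intro h1
    have hthis := Nat.div_mul_cancel hdvd
    rw [← he, h1, one_mul] at hthis
    omega
  have hepos : 0 < e := Nat.div_pos (Nat.le_of_dvd (Nat.pos_of_ne_zero hk0) hdvd) hdpos
  have h2e : 2 ≤ e := by omega
  have hple : k.minFac ≤ e := Nat.minFac_le_of_dvd h2e hedvd
  have hde : d = k / e := by rw [he, Nat.div_div_self hdvd hk0]
  rw [hde]
  exact Nat.div_le_div_left hple (Nat.minFac_pos k)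

theorem stmt_4 (q : ℕ) (hq : 2 ≤ q) (k : ℕ) (hk : 1 ≤ k) :
    (q : ℝ) ^ k - 2 * (q : ℝ) ^ ((k : ℝ) / 2) ≤
        ∑ d ∈ k.divisors, (ArithmeticFunction.moebius (k / d) : ℝ) * (q : ℝ) ^ d ∧
      ∑ d ∈ k.divisors, (ArithmeticFunction.moebius (k / d) : ℝ) * (q : ℝ) ^ d ≤ (q : ℝ) ^ k := by
  have hk0 : k ≠ 0 := by omega
  have hq2 : (2:ℝ) ≤ (q:ℝ) := by exact_mod_cast hq
  have hq1 : (1:ℝ) ≤ (q:ℝ) := by linarith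
  have hq0 : (0:ℝ) ≤ (q:ℝ) := by linarith
  have hsum : ∑ d ∈ k.divisors, (ArithmeticFunction.moebius (k / d) : ℝ) * (q : ℝ) ^ d
      = (q:ℝ) ^ k + ∑ d ∈ k.properDivisors, (ArithmeticFunction.moebius (k / d) : ℝ) * (q : ℝ) ^ d := by
    rw [← Nat.cons_self_properDivisors hk0, Finset.sum_cons, Nat.div_self (Nat.pos_of_ne_zero hk0)]
    simp
  -- proper divisors lie in Icc 1 (k/2)
  have hsub : k.properDivisors ⊆ Finset.Icc 1 (k / 2) := by
    intro d hd
    have hle := proper_le k hk0 hd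
    rw [Nat.mem_properDivisors] at hd
    have hdpos : 0 < d := Nat.pos_of_dvd_of_pos hd.1 (Nat.pos_of_ne_zero hk0)
    have h2 : k / k.minFac ≤ k / 2 := by
      rcases eq_or_ne k 1 with h1 | h1
      · subst h1; simp at hd; omega
      · exact Nat.div_le_div_left (Nat.minFac_prime h1).two_le (by norm_num)
    exact Finset.mem_Icc.mpr ⟨hdpos, hle.trans h2⟩
  -- geometric bound on absolute sum over proper divisors
  have habs : ∑ d ∈ k.properDivisors, (q:ℝ) ^ d ≤ 2 * (q:ℝ) ^ (k / 2) - 2 := by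
    calc ∑ d ∈ k.properDivisors, (q:ℝ) ^ d
        ≤ ∑ d ∈ Finset.Icc 1 (k / 2), (q:ℝ) ^ d :=
          Finset.sum_le_sum_of_subset_of_nonneg hsub (fun i _ _ => by positivity)
      _ ≤ 2 * (q:ℝ) ^ (k / 2) - 2 := geom_bound _ hq2 _
  have hrpow : (q:ℝ) ^ (k / 2 : ℕ) ≤ (q:ℝ) ^ ((k:ℝ) / 2) := by
    rw [← Real.rpow_natCast (q:ℝ) (k / 2)]
    exact Real.rpow_le_rpow_of_exponent_le hq1 (Nat.cast_div_le)
  constructor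
  · -- lower bound
    rw [hsum]
    have hT : -(∑ d ∈ k.properDivisors, (q:ℝ) ^ d)
        ≤ ∑ d ∈ k.properDivisors, (ArithmeticFunction.moebius (k / d) : ℝ) * (q : ℝ) ^ d := by
      rw [← Finset.sum_neg_distrib]
      apply Finset.sum_le_sum
      intro d _
      have h := (moeb_bounds (k / d)).1
      have : (0:ℝ) ≤ (q:ℝ) ^ d := by positivity
      nlinarith
    nlinarith
  · -- upper bound
    rw [hsum]
    rcases eq_or_ne k 1 with h1 | h1
    · subst h1; simp
    -- k ≥ 2
    have hk2 : 2 ≤ k := by omega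
    set p := k.minFac with hp
    have hpprime : p.Prime := Nat.minFac_prime h1
    set m := k / p with hmdef
    have hmdvd : m ∣ k := Nat.div_dvd_of_dvd (Nat.minFac_dvd k)
    have hmlt : m < k := Nat.div_lt_self (by omega) hpprime.two_le
    have hmpos : 0 < m := Nat.div_pos (Nat.minFac_le (by omega)) hpprime.pos
    have hmmem : m ∈ k.properDivisors := Nat.mem_properDivisors.mpr ⟨hmdvd, hmlt⟩
    have hkm : k / m = p := Nat.div_div_self (Nat.minFac_dvd k) hk0
    have hmu : (ArithmeticFunction.moebius (k / m) : ℝ) = -1 := by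
      rw [hkm, ArithmeticFunction.moebius_apply_prime hpprime]; norm_num
    rw [← Finset.sum_erase_add _ _ hmmem, hmu]
    -- bound erase part
    have hsub2 : (k.properDivisors.erase m) ⊆ Finset.Icc 1 (m - 1) := by
      intro d hd
      have hdne : d ≠ m := (Finset.mem_erase.mp hd).1
      have hdmem := (Finset.mem_erase.mp hd).2
      have hle := proper_le k hk0 hdmem
      have hle' : d ≤ m := by rw [hmdef, hp]; exact hle
      rw [Nat.mem_properDivisors] at hdmem
      have hdpos : 0 < d := Nat.pos_of_dvd_of_pos hdmem.1 (Nat.pos_of_ne_zero hk0)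
      exact Finset.mem_Icc.mpr ⟨hdpos, by omega⟩
    have herase : ∑ d ∈ k.properDivisors.erase m,
        (ArithmeticFunction.moebius (k / d) : ℝ) * (q : ℝ) ^ d ≤ 2 * (q:ℝ) ^ (m - 1) - 2 := by
      calc ∑ d ∈ k.properDivisors.erase m, (ArithmeticFunction.moebius (k / d) : ℝ) * (q : ℝ) ^ d
          ≤ ∑ d ∈ k.properDivisors.erase m, (q:ℝ) ^ d := by
            apply Finset.sum_le_sum
            intro d _
            have h := (moeb_bounds (k / d)).2
            have h2 : (0:ℝ) ≤ (q:ℝ) ^ d := by positivity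
            nlinarith
        _ ≤ ∑ d ∈ Finset.Icc 1 (m - 1), (q:ℝ) ^ d :=
            Finset.sum_le_sum_of_subset_of_nonneg hsub2 (fun i _ _ => by positivity)
        _ ≤ 2 * (q:ℝ) ^ (m - 1) - 2 := geom_bound _ hq2 _
    have hm1 : (q:ℝ) ^ m = (q:ℝ) ^ (m - 1) * q := by
      rw [← pow_succ]
      congr 1
      omega
    have h0 : (0:ℝ) ≤ (q:ℝ) ^ (m - 1) := by positivity
    nlinarith
end

section
/- For all real q ≥ 2 and all integers n ≥ 1 and m ≥ 1, one has ∑_{1 ≤ k < n/2} (k^m/q^k)·(1/(1 − k/n)) ≤ 2^{m+2}·m!/q, where the sum ranges over integers k with 1 ≤ k < n/2. -/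
theorem stmt_7 (q : ℝ) (hq : 2 ≤ q) (n m : ℕ) (hn : 1 ≤ n) (hm : 1 ≤ m) :
    ∑ k ∈ (Finset.Icc 1 n).filter (fun k => 2 * k < n),
        (k : ℝ) ^ m / q ^ k * (1 / (1 - (k : ℝ) / n)) ≤
      2 ^ (m + 2) * (Nat.factorial m) / q := by
  have hq0 : (0:ℝ) < q := lt_of_lt_of_le two_pos hq
  set S := (Finset.Icc 1 n).filter (fun k => 2 * k < n) with hS
  set f : ℕ → ℝ := fun j => ((j + m).choose m : ℝ) * (1/2 : ℝ) ^ j with hf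
  have hsum : HasSum f (2 ^ (m+1)) := by
    have h := hasSum_choose_mul_geometric_of_norm_lt_one (𝕜 := ℝ) m
      (r := (1/2:ℝ)) (by rw [Real.norm_eq_abs, abs_of_pos] <;> norm_num)
    convert h using 2
    norm_num
    rfl
    rw [show (1:ℝ) - 1/2 = 2⁻¹ by norm_num, one_div, ← inv_pow, inv_inv]
  have htail : ∑ k ∈ S, f (k - 1) ≤ 2 ^ (m+1) := by
    have himg : ∑ k ∈ S, f (k - 1) = ∑ j ∈ S.image (fun k => k - 1), f j := by
      rw [Finset.sum_image]
      intro a ha b hb hab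
      simp only [hS, Finset.mem_coe, Finset.mem_filter, Finset.mem_Icc] at ha hb hab
      omega
    rw [himg, ← hsum.tsum_eq]
    exact Summable.sum_le_tsum _ (fun j _ => by positivity) hsum.summable
  have key : ∀ k ∈ S, (k : ℝ) ^ m / q ^ k * (1 / (1 - (k : ℝ) / n)) ≤
      (2 * (Nat.factorial m) / q) * f (k - 1) := by
    intro k hk
    simp only [hS, Finset.mem_filter, Finset.mem_Icc] at hk
    obtain ⟨⟨hk1, hkn⟩, hk2⟩ := hk
    obtain ⟨j, rfl⟩ : ∃ j, k = j + 1 := ⟨k - 1, by omega⟩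
    have hn0 : (0:ℝ) < n := by exact_mod_cast Nat.pos_of_ne_zero (by omega)
    have h2k : ((j:ℝ) + 1) * 2 ≤ n := by
      have : ((2 * (j+1) : ℕ) : ℝ) ≤ (n:ℝ) := Nat.cast_le.2 (le_of_lt hk2)
      push_cast at this; linarith
    have hfrac : ((j+1 : ℕ) : ℝ) / n ≤ 1/2 := by
      rw [div_le_div_iff₀ hn0 two_pos]
      push_cast; linarith
    have hpos : (0:ℝ) < 1 - ((j+1 : ℕ) : ℝ) / n := by
      push_cast at hfrac ⊢; linarith
    have hrec : 1 / (1 - ((j+1 : ℕ) : ℝ) / n) ≤ 2 := by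
      rw [div_le_iff₀ hpos]
      push_cast at hfrac ⊢; linarith
    have hnum : (((j:ℕ)+1 : ℕ) : ℝ) ^ m ≤ (Nat.factorial m) * ((j + m).choose m) := by
      have : ((j:ℕ)+1) ^ m ≤ Nat.factorial m * ((j + m).choose m) := by
        rw [← Nat.ascFactorial_eq_factorial_mul_choose]
        exact Nat.pow_succ_le_ascFactorial (j+1) m
      exact_mod_cast this
    have hden : q * 2 ^ j ≤ q ^ (j+1) := by
      have h2j : (2:ℝ) ^ j ≤ q ^ j := pow_le_pow_left₀ (by norm_num) hq j
      calc q * 2 ^ j ≤ q * q ^ j := by nlinarith [pow_pos (show (0:ℝ) < 2 by norm_num) j]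
        _ = q ^ (j+1) := by ring
    have hterm : ((j+1 : ℕ) : ℝ) ^ m / q ^ (j+1) ≤
        ((Nat.factorial m) * ((j + m).choose m)) / (q * 2 ^ j) :=
      div_le_div₀ (by positivity) hnum (by positivity) hden
    have heq : (((Nat.factorial m) : ℝ) * ((j + m).choose m)) / (q * 2 ^ j) * 2 =
        (2 * (Nat.factorial m) / q) * f ((j+1) - 1) := by
      simp only [hf, Nat.add_sub_cancel, one_div, inv_pow]
      field_simp
    calc ((j+1 : ℕ) : ℝ) ^ m / q ^ (j+1) * (1 / (1 - ((j+1 : ℕ) : ℝ) / n))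
        ≤ ((Nat.factorial m) * ((j + m).choose m)) / (q * 2 ^ j) * 2 := by
          apply mul_le_mul hterm hrec (by positivity) (by positivity)
      _ = (2 * (Nat.factorial m) / q) * f ((j+1) - 1) := heq
  calc ∑ k ∈ S, (k : ℝ) ^ m / q ^ k * (1 / (1 - (k : ℝ) / n))
      ≤ ∑ k ∈ S, (2 * (Nat.factorial m) / q) * f (k - 1) := Finset.sum_le_sum key
    _ = (2 * (Nat.factorial m) / q) * ∑ k ∈ S, f (k - 1) := by rw [Finset.mul_sum]
    _ ≤ (2 * (Nat.factorial m) / q) * 2 ^ (m+1) := by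
        apply mul_le_mul_of_nonneg_left htail (by positivity)
    _ = 2 ^ (m + 2) * (Nat.factorial m) / q := by ring
end

section
/- For all real q ≥ 2 and all integers n ≥ 1 and m ≥ 1, one has ∑_{k=1}^{n−1} (k^m/q^k)·(1/(1 − k/n)) ≤ 3^{m+3}·m!/q. -/
open Finset

private lemma pow_le_descFac (k m : ℕ) : k ^ m ≤ (k + m).descFactorial m := by
  induction m with
  | zero => simp
  | succ m ih =>
    have h : k + (m + 1) = (k + m) + 1 := by omega
    rw [h, Nat.succ_descFactorial_succ]
    calc k ^ (m + 1) = k * k ^ m := by ring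
    _ ≤ (k + m + 1) * (k + m).descFactorial m := Nat.mul_le_mul (by omega) ih

private lemma pow_le_fact_choose (k m : ℕ) :
    (k : ℝ) ^ m ≤ (Nat.factorial m : ℝ) * ((k + m).choose m : ℝ) := by
  have := pow_le_descFac k m
  rw [Nat.descFactorial_eq_factorial_mul_choose] at this
  exact_mod_cast this

private lemma T_bound (s : ℕ) : ∀ N : ℕ,
    ∑ k ∈ Finset.range N, ((k + s).choose s : ℝ) / 2 ^ k ≤ 2 ^ (s + 1) := by
  induction s with
  | zero =>
    intro N
    have : ∑ k ∈ Finset.range N, ((k + 0).choose 0 : ℝ) / 2 ^ k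
        = ∑ k ∈ Finset.range N, (1 / (2:ℝ)) ^ k := by
      apply Finset.sum_congr rfl
      intro k _
      simp [div_pow]
    rw [this]
    simpa using sum_geometric_two_le N
  | succ s ih =>
    intro N
    induction N with
    | zero => simp
    | succ N ihN =>
      rw [Finset.sum_range_succ']
      have key : ∀ i ∈ Finset.range N,
          ((i + 1 + (s + 1)).choose (s + 1) : ℝ) / 2 ^ (i + 1)
            = ((i + 1 + s).choose s : ℝ) / 2 ^ (i + 1)
              + (1/2) * (((i + (s + 1)).choose (s + 1) : ℝ) / 2 ^ i) := by
        intro i _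
        have h1 : i + 1 + (s + 1) = (i + 1 + s) + 1 := by omega
        rw [h1, Nat.choose_succ_succ]
        have h2 : i + 1 + s = i + (s + 1) := by omega
        push_cast
        rw [h2]
        ring
      rw [Finset.sum_congr rfl key, Finset.sum_add_distrib]
      have hA : ∑ i ∈ Finset.range N, ((i + 1 + s).choose s : ℝ) / 2 ^ (i + 1)
          ≤ 2 ^ (s + 1) - 1 := by
        have := ih (N + 1)
        rw [Finset.sum_range_succ'] at this
        have h0 : ((0 + s).choose s : ℝ) / 2 ^ 0 = 1 := by simp
        rw [h0] at this
        linarith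
      have hB : ∑ i ∈ Finset.range N, (1/2 : ℝ) * (((i + (s + 1)).choose (s + 1) : ℝ) / 2 ^ i)
          ≤ 2 ^ (s + 1) := by
        rw [← Finset.mul_sum]
        have hp : (2:ℝ) ^ (s + 1 + 1) = 2 * 2 ^ (s + 1) := by ring
        linarith [ihN]
      have h0 : ((0 + (s + 1)).choose (s + 1) : ℝ) / 2 ^ 0 = 1 := by simp
      rw [h0]
      have : (2 : ℝ) ^ (s + 1 + 1) = 2 ^ (s + 1) + 2 ^ (s + 1) := by ring
      linarith

private lemma q_pow_lb (q : ℝ) (hq : 2 ≤ q) : ∀ k : ℕ, 1 ≤ k → q * 2 ^ k ≤ 2 * q ^ k := by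
  intro k hk
  induction k with
  | zero => omega
  | succ k ih =>
    rcases Nat.eq_or_lt_of_le hk with h | h
    · obtain rfl : k = 0 := by omega
      norm_num
      linarith
    · have hk1 : 1 ≤ k := by omega
      have := ih hk1
      have h2k : (0:ℝ) < 2 ^ k := by positivity
      have hq0 : (0:ℝ) < q := by linarith
      have hqk : (2:ℝ) ^ k ≤ q ^ k := pow_le_pow_left₀ (by norm_num) hq k
      calc q * 2 ^ (k + 1) = 2 * (q * 2 ^ k) := by ring
      _ ≤ 2 * (2 * q ^ k) := by linarith
      _ ≤ q * (2 * q ^ k) := by nlinarith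
      _ = 2 * q ^ (k + 1) := by ring

private lemma final_nat : ∀ m : ℕ, 1 ≤ m → 16 * (m + 1) * 2 ^ m ≤ 27 * 3 ^ m := by
  intro m hm
  induction m with
  | zero => omega
  | succ m ih =>
    rcases Nat.eq_or_lt_of_le hm with h | h
    · obtain rfl : m = 0 := by omega
      norm_num
    · have hm1 : 1 ≤ m := by omega
      have hih := ih hm1
      have key : 32 * (m + 2) ≤ 48 * (m + 1) := by omega
      calc 16 * (m + 1 + 1) * 2 ^ (m + 1) = 32 * (m + 2) * 2 ^ m := by ring
      _ ≤ 48 * (m + 1) * 2 ^ m := Nat.mul_le_mul_right _ key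
      _ = 3 * (16 * (m + 1) * 2 ^ m) := by ring
      _ ≤ 3 * (27 * 3 ^ m) := Nat.mul_le_mul_left 3 hih
      _ = 27 * 3 ^ (m + 1) := by ring

theorem stmt_11 (q : ℝ) (hq : 2 ≤ q) (n m : ℕ) (hn : 1 ≤ n) (hm : 1 ≤ m) :
    ∑ k ∈ Finset.Icc 1 (n - 1),
        (k : ℝ) ^ m / q ^ k * (1 / (1 - (k : ℝ) / n)) ≤
      3 ^ (m + 3) * (Nat.factorial m) / q := by
  have hq0 : (0:ℝ) < q := by linarith
  have hn0 : (0:ℝ) < (n:ℝ) := by exact_mod_cast hn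
  have step1 : ∀ k ∈ Finset.Icc 1 (n - 1),
      (k : ℝ) ^ m / q ^ k * (1 / (1 - (k : ℝ) / n)) ≤ 4 / q * ((k:ℝ) ^ (m+1) / 2 ^ k) := by
    intro k hk
    rw [Finset.mem_Icc] at hk
    obtain ⟨hk1, hk2⟩ := hk
    have hkn : (k:ℝ) + 1 ≤ (n:ℝ) := by
      have : k + 1 ≤ n := by omega
      exact_mod_cast this
    have hk1r : (1:ℝ) ≤ (k:ℝ) := by exact_mod_cast hk1
    have hpos : 0 < 1 - (k:ℝ) / n := by
      rw [sub_pos, div_lt_one hn0]; linarith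
    have hb : 1 / (1 - (k:ℝ) / n) ≤ (k:ℝ) + 1 := by
      rw [div_le_iff₀ hpos]
      have hexp : ((k:ℝ) + 1) * (1 - (k:ℝ)/n) - 1 = (k:ℝ) * ((n:ℝ) - (k:ℝ) - 1) / n := by
        field_simp; ring
      have hnn : 0 ≤ (k:ℝ) * ((n:ℝ) - (k:ℝ) - 1) / n := by
        apply div_nonneg _ (le_of_lt hn0)
        nlinarith
      linarith
    have hqk : (0:ℝ) < q ^ k := by positivity
    have h2k : (0:ℝ) < (2:ℝ) ^ k := by positivity
    have hq2 : q * 2 ^ k ≤ 2 * q ^ k := q_pow_lb q hq k hk1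
    have hkm : (0:ℝ) ≤ (k:ℝ) ^ m / q ^ k := by positivity
    calc (k : ℝ) ^ m / q ^ k * (1 / (1 - (k : ℝ) / n))
        ≤ (k:ℝ) ^ m / q ^ k * ((k:ℝ) + 1) := by
          apply mul_le_mul_of_nonneg_left hb hkm
      _ ≤ (k:ℝ) ^ m / q ^ k * (2 * (k:ℝ)) := by
          apply mul_le_mul_of_nonneg_left _ hkm
          linarith
      _ = 2 * (k:ℝ) ^ (m+1) / q ^ k := by ring
      _ ≤ 4 / q * ((k:ℝ) ^ (m+1) / 2 ^ k) := by
          rw [div_le_iff₀ hqk]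
          have hknn : (0:ℝ) ≤ (k:ℝ) ^ (m+1) := by positivity
          have : 4 / q * ((k:ℝ) ^ (m+1) / 2 ^ k) * q ^ k - 2 * (k:ℝ) ^ (m+1)
              = 2 * (k:ℝ) ^ (m+1) * (2 * q ^ k - q * 2 ^ k) / (q * 2 ^ k) := by
            field_simp; ring
          have hpos2 : (0:ℝ) < q * 2 ^ k := by positivity
          have : 0 ≤ 4 / q * ((k:ℝ) ^ (m+1) / 2 ^ k) * q ^ k - 2 * (k:ℝ) ^ (m+1) := by
            rw [this]
            apply div_nonneg _ (le_of_lt hpos2)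
            nlinarith
          linarith
  have hsub : Finset.Icc 1 (n - 1) ⊆ Finset.range n := by
    intro k hk
    rw [Finset.mem_Icc] at hk
    rw [Finset.mem_range]
    omega
  have step2 : ∑ k ∈ Finset.Icc 1 (n-1), (k:ℝ) ^ (m+1) / 2 ^ k
      ≤ ∑ k ∈ Finset.range n, (k:ℝ) ^ (m+1) / 2 ^ k := by
    apply Finset.sum_le_sum_of_subset_of_nonneg hsub
    intro k _ _
    positivity
  have step3 : ∑ k ∈ Finset.range n, (k:ℝ) ^ (m+1) / 2 ^ k
      ≤ (Nat.factorial (m+1) : ℝ) * 2 ^ (m + 2) := by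
    calc ∑ k ∈ Finset.range n, (k:ℝ) ^ (m+1) / 2 ^ k
        ≤ ∑ k ∈ Finset.range n, (Nat.factorial (m+1) : ℝ) * (((k + (m+1)).choose (m+1) : ℝ) / 2 ^ k) := by
          apply Finset.sum_le_sum
          intro k _
          have h2k : (0:ℝ) < (2:ℝ) ^ k := by positivity
          have := pow_le_fact_choose k (m+1)
          rw [div_le_iff₀ h2k] -- goal: k^(m+1) ≤ fact * (choose / 2^k) * 2^k
          calc (k:ℝ) ^ (m+1) ≤ (Nat.factorial (m+1) : ℝ) * ((k + (m+1)).choose (m+1) : ℝ) := this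
          _ = (Nat.factorial (m+1) : ℝ) * (((k + (m+1)).choose (m+1) : ℝ) / 2 ^ k) * 2 ^ k := by
            field_simp
      _ = (Nat.factorial (m+1) : ℝ) * ∑ k ∈ Finset.range n, ((k + (m+1)).choose (m+1) : ℝ) / 2 ^ k := by
          rw [Finset.mul_sum]
      _ ≤ (Nat.factorial (m+1) : ℝ) * 2 ^ (m + 2) := by
          apply mul_le_mul_of_nonneg_left _ (by positivity)
          simpa using T_bound (m+1) n
  have hfin : 4 * ((Nat.factorial (m+1) : ℝ) * 2 ^ (m+2)) ≤ 3 ^ (m+3) * (Nat.factorial m : ℝ) := by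
    have h := final_nat m hm
    have : (4:ℕ) * (Nat.factorial (m+1) * 2 ^ (m+2)) ≤ 3 ^ (m+3) * Nat.factorial m := by
      rw [Nat.factorial_succ]
      calc 4 * ((m+1) * Nat.factorial m * 2 ^ (m+2)) = (16 * (m+1) * 2 ^ m) * Nat.factorial m := by ring
      _ ≤ (27 * 3 ^ m) * Nat.factorial m := Nat.mul_le_mul_right _ h
      _ = 3 ^ (m+3) * Nat.factorial m := by ring
    exact_mod_cast this
  calc ∑ k ∈ Finset.Icc 1 (n - 1), (k : ℝ) ^ m / q ^ k * (1 / (1 - (k : ℝ) / n))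
      ≤ ∑ k ∈ Finset.Icc 1 (n - 1), 4 / q * ((k:ℝ) ^ (m+1) / 2 ^ k) := Finset.sum_le_sum step1
    _ = 4 / q * ∑ k ∈ Finset.Icc 1 (n-1), (k:ℝ) ^ (m+1) / 2 ^ k := by rw [Finset.mul_sum]
    _ ≤ 4 / q * ((Nat.factorial (m+1) : ℝ) * 2 ^ (m + 2)) := by
        apply mul_le_mul_of_nonneg_left (le_trans step2 step3) (by positivity)
    _ ≤ 3 ^ (m + 3) * (Nat.factorial m) / q := by
        rw [div_mul_eq_mul_div, div_le_div_iff₀ hq0 hq0]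
        calc 4 * ((Nat.factorial (m+1) : ℝ) * 2 ^ (m+2)) * q
            ≤ 3 ^ (m+3) * (Nat.factorial m : ℝ) * q := by
              apply mul_le_mul_of_nonneg_right hfin (le_of_lt hq0)
          _ = 3 ^ (m + 3) * (Nat.factorial m) * q := by norm_num
end

section
/- For every real number q ≥ 2 and all integers j ≥ 0 and n ≥ 1, the tail of the series satisfies ∑_{k=n}^{∞} k^j/q^k ≤ 2^{j+1}·j!·n^j/q^n. -/
lemma aux_pow_le_descFactorial (k j : ℕ) : (k + 1) ^ j ≤ (k + j).descFactorial j := by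
  induction j with
  | zero => simp
  | succ j ih =>
    have : (k + (j + 1)).descFactorial (j + 1) = (k + j + 1) * (k + j).descFactorial j :=
      Nat.succ_descFactorial_succ (k + j) j
    rw [this, pow_succ, mul_comm]
    exact Nat.mul_le_mul (by omega) ih

lemma aux_nat_bound (n k j : ℕ) (hn : 1 ≤ n) :
    (n + k) ^ j ≤ n ^ j * (Nat.factorial j * (k + j).choose j) := by
  rw [← Nat.descFactorial_eq_factorial_mul_choose]
  calc (n + k) ^ j ≤ (n * (k + 1)) ^ j := by
        apply Nat.pow_le_pow_left; nlinarith
    _ = n ^ j * (k + 1) ^ j := mul_pow _ _ _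
    _ ≤ n ^ j * (k + j).descFactorial j :=
        Nat.mul_le_mul_left _ (aux_pow_le_descFactorial k j)

theorem stmt_12 (q : ℝ) (hq : 2 ≤ q) (j n : ℕ) (hn : 1 ≤ n) :
    Summable (fun k : ℕ => ((n + k : ℕ) : ℝ) ^ j / q ^ (n + k)) ∧
      ∑' k : ℕ, ((n + k : ℕ) : ℝ) ^ j / q ^ (n + k) ≤
        2 ^ (j + 1) * (Nat.factorial j) * (n : ℝ) ^ j / q ^ n := by
  have hq0 : (0 : ℝ) < q := by linarith
  have hr : ‖(1/2 : ℝ)‖ < 1 := by norm_num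
  have hgs : HasSum (fun k : ℕ => ((k + j).choose j : ℝ) * (1/2) ^ k)
      (1 / (1 - 1/2) ^ (j + 1)) := hasSum_choose_mul_geometric_of_norm_lt_one j hr
  set C : ℝ := (n : ℝ) ^ j * Nat.factorial j / q ^ n with hC
  have hC0 : 0 ≤ C := by positivity
  have hterm : ∀ k : ℕ, ((n + k : ℕ) : ℝ) ^ j / q ^ (n + k) ≤
      C * (((k + j).choose j : ℝ) * (1/2) ^ k) := by
    intro k
    have h2k : (2 : ℝ) ^ k ≤ q ^ k := pow_le_pow_left₀ (by norm_num) hq k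
    have hqk : (0 : ℝ) < q ^ k := by positivity
    have hqn : (0 : ℝ) < q ^ n := by positivity
    have hnat : (((n + k) ^ j : ℕ) : ℝ) ≤
        ((n ^ j * (Nat.factorial j * (k + j).choose j) : ℕ) : ℝ) :=
      Nat.cast_le.2 (aux_nat_bound n k j hn)
    push_cast at hnat
    rw [pow_add, hC]
    rw [div_mul_eq_mul_div, div_le_div_iff₀ (by positivity) (by positivity)]
    have h1 : ((n + k : ℕ) : ℝ) ^ j ≤ (n : ℝ) ^ j * (Nat.factorial j * ((k + j).choose j : ℝ)) := by
      push_cast; linarith [hnat]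
    have h2 : (1 : ℝ) ≤ (1/2 : ℝ) ^ k * q ^ k := by
      rw [← mul_pow]
      calc (1:ℝ) = 1 ^ k := (one_pow k).symm
        _ ≤ (1/2 * q) ^ k := pow_le_pow_left₀ (by norm_num) (by linarith) k
    calc ((n + k : ℕ) : ℝ) ^ j * q ^ n
        ≤ ((n : ℝ) ^ j * (Nat.factorial j * ((k + j).choose j : ℝ))) * q ^ n := by
          apply mul_le_mul_of_nonneg_right h1 (le_of_lt hqn)
      _ ≤ ((n : ℝ) ^ j * (Nat.factorial j * ((k + j).choose j : ℝ))) * q ^ n *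
            ((1/2) ^ k * q ^ k) := le_mul_of_one_le_right (by positivity) h2
      _ = (n : ℝ) ^ j * Nat.factorial j * (((k + j).choose j : ℝ) * (1/2) ^ k) *
            (q ^ n * q ^ k) := by ring
  have hnonneg : ∀ k : ℕ, 0 ≤ ((n + k : ℕ) : ℝ) ^ j / q ^ (n + k) := by
    intro k; positivity
  have hgsum : Summable (fun k : ℕ => C * (((k + j).choose j : ℝ) * (1/2) ^ k)) :=
    hgs.summable.mul_left C
  have hsum : Summable (fun k : ℕ => ((n + k : ℕ) : ℝ) ^ j / q ^ (n + k)) :=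
    Summable.of_nonneg_of_le hnonneg hterm hgsum
  refine ⟨hsum, ?_⟩
  have hle := Summable.tsum_le_tsum hterm hsum hgsum
  have heq : ∑' k : ℕ, C * (((k + j).choose j : ℝ) * (1/2) ^ k) = C * (2 ^ (j + 1)) := by
    rw [tsum_mul_left, hgs.tsum_eq]
    congr 1
    rw [show (1:ℝ) - 1/2 = 2⁻¹ by norm_num, inv_pow, one_div, inv_inv]
  rw [heq] at hle
  calc ∑' k : ℕ, ((n + k : ℕ) : ℝ) ^ j / q ^ (n + k) ≤ C * 2 ^ (j + 1) := hle
    _ = 2 ^ (j + 1) * (Nat.factorial j) * (n : ℝ) ^ j / q ^ n := by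
        rw [hC]; ring
end

section
/- For all real q ≥ 2 and integers n ≥ 1, j ≥ 0, one has |(q^n/n^{j+1})·∑_{k=1}^{n−1} k^j/q^k − (q^{n−1}/n^{j+1})·∑_{i=0}^{j} (−1)^{j−i}·i!·S(j,i)·(q/(q−1))^{i+1}| ≤ 2^{j+1}·j!/n. -/
open Finset

/-- The Stirling numbers of the second kind: `stirling2 n k` is the number of
partitions of a set with `n` elements into `k` nonempty blocks. -/
def stirling2 : ℕ → ℕ → ℕ
  | 0, 0 => 1
  | 0, _ + 1 => 0
  | _ + 1, 0 => 0
  | n + 1, k + 1 => (k + 1) * stirling2 n (k + 1) + stirling2 n k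

lemma stirling2_zero_of_lt : ∀ {j i : ℕ}, j < i → stirling2 j i = 0 := by
  intro j
  induction j with
  | zero =>
    intro i hi
    match i, hi with
    | (k+1), _ => rfl
  | succ j ih =>
    intro i hi
    match i, hi with
    | (k+1), hi =>
      show (k+1) * stirling2 j (k+1) + stirling2 j k = 0
      rw [ih (by omega), ih (by omega)]
      simp

lemma key_identity (j t : ℕ) :
    ((t : ℝ) + 1) ^ j = ∑ i ∈ range (j + 1),
      (-1 : ℝ) ^ (j - i) * (Nat.factorial i) * (stirling2 j i) * ((t + i).choose i) := by
  induction j with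
  | zero => simp [stirling2]
  | succ j ih =>
    have hstep : ∀ i : ℕ, ((t : ℝ) + 1) * ((t + i).choose i : ℝ) =
        ((i : ℝ) + 1) * ((t + i + 1).choose (i + 1) : ℝ) - (i : ℝ) * ((t + i).choose i : ℝ) := by
      intro i
      have h := Nat.add_one_mul_choose_eq (t + i) i
      have h' : ((t + i + 1 : ℕ) : ℝ) * ((t + i).choose i : ℝ)
          = ((t + i + 1).choose (i + 1) : ℝ) * ((i : ℝ) + 1) := by
        exact_mod_cast congrArg (Nat.cast (R := ℝ)) h
      push_cast at h'
      linear_combination h'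
    have hA : ((t : ℝ) + 1) ^ (j + 1)
        = (∑ i ∈ range (j + 1),
            (-1:ℝ)^(j-i) * (Nat.factorial i) * (stirling2 j i) * (((i:ℝ)+1) * ((t+i+1).choose (i+1))))
          - ∑ i ∈ range (j + 1),
            (-1:ℝ)^(j-i) * (Nat.factorial i) * (stirling2 j i) * ((i:ℝ) * ((t+i).choose i)) := by
      rw [pow_succ, ih, sum_mul, ← Finset.sum_sub_distrib]
      refine sum_congr rfl fun i _ => ?_
      calc (-1:ℝ)^(j-i) * (Nat.factorial i) * (stirling2 j i) * ((t+i).choose i) * ((t:ℝ)+1)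
          = (-1:ℝ)^(j-i) * (Nat.factorial i) * (stirling2 j i) * (((t:ℝ)+1) * ((t+i).choose i)) := by
            ring
        _ = _ := by rw [hstep i]; ring
    rw [hA]
    conv_rhs => rw [Finset.sum_range_succ']
    have h00 : stirling2 (j + 1) 0 = 0 := rfl
    simp only [h00, Nat.cast_zero, mul_zero, zero_mul, add_zero]
    have hsplit : ∀ m ∈ range (j + 1),
        (-1:ℝ)^(j+1-(m+1)) * (Nat.factorial (m+1)) * (stirling2 (j+1) (m+1)) * ((t+(m+1)).choose (m+1))
        = (-1:ℝ)^(j-m) * (Nat.factorial m) * (stirling2 j m) * (((m:ℝ)+1) * ((t+m+1).choose (m+1)))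
          + (-1:ℝ)^(j-m) * (((m:ℝ)+1) * (Nat.factorial m)) * (((m:ℝ)+1) * (stirling2 j (m+1))) * ((t+m+1).choose (m+1)) := by
      intro m _
      have e1 : j + 1 - (m + 1) = j - m := by omega
      have e2 : stirling2 (j+1) (m+1) = (m+1) * stirling2 j (m+1) + stirling2 j m := rfl
      have e3 : t + (m+1) = t + m + 1 := by omega
      rw [e1, e2, e3, Nat.factorial_succ]
      push_cast
      ring
    rw [Finset.sum_congr rfl hsplit, Finset.sum_add_distrib]
    have hb : ∑ m ∈ range (j+1),
        (-1:ℝ)^(j-m) * (((m:ℝ)+1) * (Nat.factorial m)) * (((m:ℝ)+1) * (stirling2 j (m+1))) * ((t+m+1).choose (m+1))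
        = - ∑ i ∈ range (j+1),
            (-1:ℝ)^(j-i) * (Nat.factorial i) * (stirling2 j i) * ((i:ℝ) * ((t+i).choose i)) := by
      rw [Finset.sum_range_succ, stirling2_zero_of_lt (Nat.lt_succ_self j)]
      conv_rhs => rw [Finset.sum_range_succ']
      simp only [Nat.cast_zero, Nat.cast_ofNat, zero_mul, mul_zero, add_zero, Nat.cast_succ]
      rw [← Finset.sum_neg_distrib]
      refine sum_congr rfl fun m hm => ?_
      have hmj : m < j := mem_range.mp hm
      have e : j - m = (j - (m+1)) + 1 := by omega
      have e3 : t + (m+1) = t + m + 1 := by omega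
      rw [e, e3, pow_succ, Nat.factorial_succ]
      push_cast
      ring
    rw [hb]
    ring

lemma hasSum_aux (j : ℕ) {x : ℝ} (h0 : 0 < x) (h1 : x < 1) :
    HasSum (fun t : ℕ => ((t : ℝ) + 1) ^ j * x ^ t)
      (∑ i ∈ range (j + 1),
        (-1 : ℝ) ^ (j - i) * (Nat.factorial i) * (stirling2 j i) * (1 / (1 - x)) ^ (i + 1)) := by
  have hx : ‖x‖ < 1 := by rw [Real.norm_eq_abs, abs_of_pos h0]; exact h1
  have H : ∀ i ∈ range (j + 1), HasSum
      (fun t : ℕ => (-1:ℝ)^(j-i) * (Nat.factorial i) * (stirling2 j i) *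
        (((t + i).choose i : ℝ) * x ^ t))
      ((-1:ℝ)^(j-i) * (Nat.factorial i) * (stirling2 j i) * (1 / (1 - x)) ^ (i + 1)) := by
    intro i _
    have h := (hasSum_choose_mul_geometric_of_norm_lt_one i hx).mul_left
      ((-1:ℝ)^(j-i) * (Nat.factorial i) * (stirling2 j i))
    rw [div_pow, one_pow]; exact h
  have h2 := hasSum_sum H
  have hfun : (fun t : ℕ => ∑ i ∈ range (j + 1),
      (-1:ℝ)^(j-i) * (Nat.factorial i) * (stirling2 j i) * (((t + i).choose i : ℝ) * x ^ t))
      = fun t : ℕ => ((t : ℝ) + 1) ^ j * x ^ t := by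
    funext t
    rw [key_identity j t, sum_mul]
    exact sum_congr rfl fun i _ => by ring
  rwa [hfun] at h2

lemma summable_aux (j c : ℕ) {x : ℝ} (h0 : 0 < x) (h1 : x < 1) :
    Summable (fun t : ℕ => ((t : ℝ) + c) ^ j * x ^ t) := by
  have hx : ‖x‖ < 1 := by rw [Real.norm_eq_abs, abs_of_pos h0]; exact h1
  have h := summable_pow_mul_geometric_of_norm_lt_one (R := ℝ) j hx
  have h2 := (summable_nat_add_iff c).2 h
  have h3 := h2.mul_right ((x ^ c)⁻¹)
  refine h3.congr fun t => ?_
  have hxc : x ^ c ≠ 0 := by positivity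
  push_cast
  rw [pow_add]
  field_simp

lemma two_pow_le_factorial_succ : ∀ d : ℕ, 2 ^ d ≤ Nat.factorial (d + 1) := by
  intro d
  induction d with
  | zero => simp [Nat.factorial]
  | succ d ih =>
    calc 2 ^ (d + 1) = 2 * 2 ^ d := by ring
    _ ≤ 2 * Nat.factorial (d + 1) := by omega
    _ ≤ (d + 2) * Nat.factorial (d + 1) := Nat.mul_le_mul_right _ (by omega)
    _ = Nat.factorial (d + 2) := (Nat.factorial_succ _).symm

lemma arith_bound (j : ℕ) (hj : 1 ≤ j) :
    2 + ∑ i ∈ range j, ((j.choose i : ℝ) * 2 ^ (i + 1) * (Nat.factorial i)) ≤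
      2 ^ (j + 1) * (Nat.factorial j) := by
  rcases Nat.lt_or_ge j 2 with hj2 | hj2
  · interval_cases j
    · simp [Nat.factorial]
      norm_num
  · -- j ≥ 2
    have hterm : ∀ i ∈ range j, (j.choose i : ℝ) * 2 ^ (i + 1) * (Nat.factorial i)
        ≤ (Nat.factorial j : ℝ) * (2 * 4 ^ i * (1/2) ^ (j - 1)) := by
      intro i hi
      have hij : i < j := mem_range.mp hi
      have hnat : j.choose i * Nat.factorial i * 2 ^ (j - i - 1) ≤ Nat.factorial j := by
        have h1 : 2 ^ (j - i - 1) ≤ Nat.factorial (j - i) := by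
          have := two_pow_le_factorial_succ (j - i - 1)
          have e : j - i - 1 + 1 = j - i := by omega
          rwa [e] at this
        calc j.choose i * Nat.factorial i * 2 ^ (j - i - 1)
            ≤ j.choose i * Nat.factorial i * Nat.factorial (j - i) :=
              Nat.mul_le_mul_left _ h1
          _ = Nat.factorial j := Nat.choose_mul_factorial_mul_factorial hij.le
      have hreal : (j.choose i : ℝ) * (Nat.factorial i) * 2 ^ (j - i - 1) ≤ (Nat.factorial j : ℝ) := by
        exact_mod_cast hnat
      have hpow : (2:ℝ) ^ (i + 1) = 2 * 4 ^ i * (1/2) ^ (j - 1) * 2 ^ (j - i - 1) := by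
        have e1 : (4:ℝ) ^ i = 2 ^ (2 * i) := by
          rw [pow_mul]; norm_num
        have e2 : (1/2:ℝ) ^ (j - 1) = (2 ^ (j - 1))⁻¹ := by
          rw [div_pow, one_pow, inv_eq_one_div]
        rw [e1, e2]
        rw [show (2:ℝ) * 2^(2*i) * ((2:ℝ)^(j-1))⁻¹ * 2^(j-i-1)
            = (2:ℝ)^(1 + 2*i + (j - i - 1)) * ((2:ℝ) ^ (j-1))⁻¹ from by
          rw [pow_add, pow_add, pow_one]; ring]
        rw [show 1 + 2*i + (j - i - 1) = (i + 1) + (j - 1) from by omega]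
        rw [pow_add]
        field_simp
        rw [pow_add, pow_succ]
      calc (j.choose i : ℝ) * 2 ^ (i + 1) * (Nat.factorial i)
          = ((j.choose i : ℝ) * (Nat.factorial i) * 2 ^ (j - i - 1)) * (2 * 4 ^ i * (1/2) ^ (j - 1)) := by
            rw [hpow]; ring
        _ ≤ (Nat.factorial j : ℝ) * (2 * 4 ^ i * (1/2) ^ (j - 1)) := by
            apply mul_le_mul_of_nonneg_right hreal
            positivity
    have hsum := Finset.sum_le_sum hterm
    have hgeom : ∑ i ∈ range j, (4:ℝ) ^ i = (4 ^ j - 1) / 3 := by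
      rw [geom_sum_eq (by norm_num : (4:ℝ) ≠ 1)]
      norm_num
    have hsum2 : ∑ i ∈ range j, (Nat.factorial j : ℝ) * (2 * 4 ^ i * (1/2) ^ (j - 1))
        = (Nat.factorial j : ℝ) * 2 * (1/2) ^ (j - 1) * ((4 ^ j - 1) / 3) := by
      rw [← hgeom, mul_sum]
      rw [Finset.sum_congr rfl (fun i _ => by ring : ∀ i ∈ range j,
        (Nat.factorial j : ℝ) * (2 * 4 ^ i * (1/2) ^ (j - 1))
          = ((Nat.factorial j : ℝ) * 2 * (1/2) ^ (j - 1)) * 4 ^ i), ← mul_sum]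
    have hkey : (1/2:ℝ) ^ (j - 1) * 4 ^ j = 2 ^ (j + 1) := by
      have e1 : (4:ℝ) ^ j = 2 ^ (j - 1) * 2 ^ (j + 1) := by
        rw [← pow_add, show j - 1 + (j + 1) = 2 * j from by omega, pow_mul]
        norm_num
      rw [e1, div_pow, one_pow]
      field_simp
    have hfin : (Nat.factorial j : ℝ) * 2 * (1/2) ^ (j - 1) * ((4 ^ j - 1) / 3)
        ≤ (2/3) * (2 ^ (j + 1) * (Nat.factorial j)) := by
      have h4 : (Nat.factorial j : ℝ) * 2 * (1/2) ^ (j - 1) * ((4 ^ j - 1) / 3)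
          ≤ (Nat.factorial j : ℝ) * 2 * (1/2) ^ (j - 1) * (4 ^ j / 3) := by
        apply mul_le_mul_of_nonneg_left _ (by positivity)
        linarith
      calc (Nat.factorial j : ℝ) * 2 * (1/2) ^ (j - 1) * ((4 ^ j - 1) / 3)
          ≤ (Nat.factorial j : ℝ) * 2 * (1/2) ^ (j - 1) * (4 ^ j / 3) := h4
        _ = (2/3) * (((1/2) ^ (j-1) * 4 ^ j) * (Nat.factorial j : ℝ)) := by ring
        _ = (2/3) * (2 ^ (j + 1) * (Nat.factorial j)) := by rw [hkey]
    have hbig : (8:ℝ) ≤ 2 ^ (j + 1) * (Nat.factorial j) := by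
      have h8 : (2:ℝ) ^ 3 ≤ 2 ^ (j + 1) := by
        apply pow_le_pow_right₀ (by norm_num)
        omega
      have hf1 : (1:ℝ) ≤ (Nat.factorial j : ℝ) := by
        exact_mod_cast Nat.one_le_iff_ne_zero.mpr (Nat.factorial_ne_zero j)
      nlinarith
    calc 2 + ∑ i ∈ range j, ((j.choose i : ℝ) * 2 ^ (i + 1) * (Nat.factorial i))
        ≤ 2 + (Nat.factorial j : ℝ) * 2 * (1/2) ^ (j - 1) * ((4 ^ j - 1) / 3) := by
          rw [← hsum2]; linarith [hsum]
      _ ≤ 2 + (2/3) * (2 ^ (j + 1) * (Nat.factorial j)) := by linarith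
      _ ≤ 2 ^ (j + 1) * (Nat.factorial j) := by linarith

lemma partial_bound : ∀ j N : ℕ,
    ∑ t ∈ range N, ((t : ℝ) + 1) ^ j * (1/2 : ℝ) ^ t ≤ 2 ^ (j + 1) * (Nat.factorial j) := by
  intro j
  induction j using Nat.strong_induction_on with
  | _ j IH =>
  intro N
  rcases Nat.eq_zero_or_pos j with rfl | hj
  · simpa [Nat.factorial] using sum_geometric_two_le N
  have aux : ∀ i, i < j → ∀ M : ℕ,
      ∑ t ∈ range M, (t : ℝ) ^ i * (1/2 : ℝ) ^ t ≤ (0:ℝ) ^ i + 2 ^ i * (Nat.factorial i) := by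
    intro i hi M
    cases M with
    | zero =>
      simp only [range_zero, sum_empty]
      positivity
    | succ M =>
      rw [Finset.sum_range_succ']
      have h1 : ∑ t ∈ range M, ((t + 1 : ℕ) : ℝ) ^ i * (1/2 : ℝ) ^ (t + 1)
          = (1/2) * ∑ t ∈ range M, ((t : ℝ) + 1) ^ i * (1/2 : ℝ) ^ t := by
        rw [mul_sum]
        refine sum_congr rfl fun t _ => ?_
        push_cast
        ring
      rw [h1]
      have h2 := IH i hi M
      have h3 : (1/2 : ℝ) * ∑ t ∈ range M, ((t : ℝ) + 1) ^ i * (1/2 : ℝ) ^ t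
          ≤ 2 ^ i * (Nat.factorial i) := by
        have : (1/2 : ℝ) * (2 ^ (i + 1) * (Nat.factorial i)) = 2 ^ i * (Nat.factorial i) := by
          rw [pow_succ]; ring
        nlinarith
      have h4 : ((0 : ℕ) : ℝ) ^ i * (1/2 : ℝ) ^ 0 = (0:ℝ) ^ i := by norm_num
      rw [h4]
      linarith
  -- main chain
  set P := ∑ t ∈ range N, ((t : ℝ) + 1) ^ j * (1/2 : ℝ) ^ t with hP
  set Q := ∑ t ∈ range N, (t : ℝ) ^ j * (1/2 : ℝ) ^ t with hQ
  have hhalfP : (1/2 : ℝ) * P = Q + (N : ℝ) ^ j * (1/2 : ℝ) ^ N := by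
    have hs := Finset.sum_range_succ' (fun t : ℕ => (t : ℝ) ^ j * (1/2 : ℝ) ^ t) N
    rw [Finset.sum_range_succ] at hs
    have h0 : ((0 : ℕ) : ℝ) ^ j * (1/2 : ℝ) ^ 0 = 0 := by
      rw [Nat.cast_zero, zero_pow hj.ne']
      ring
    rw [h0, add_zero] at hs
    have h1 : (1/2 : ℝ) * P = ∑ t ∈ range N, ((t + 1 : ℕ) : ℝ) ^ j * (1/2 : ℝ) ^ (t + 1) := by
      rw [hP, mul_sum]
      refine sum_congr rfl fun t _ => ?_
      push_cast
      ring
    rw [h1, ← hs]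
  have hfN : (0:ℝ) ≤ (N : ℝ) ^ j * (1/2 : ℝ) ^ N := by positivity
  -- P - Q as binomial sum
  have hbinom : ∀ t : ℕ, ((t : ℝ) + 1) ^ j - (t : ℝ) ^ j
      = ∑ i ∈ range j, (j.choose i : ℝ) * (t : ℝ) ^ i := by
    intro t
    have h := add_pow (t : ℝ) 1 j
    rw [Finset.sum_range_succ] at h
    simp only [one_pow, mul_one, Nat.choose_self, Nat.cast_one] at h
    rw [h]
    rw [Finset.sum_congr rfl (fun i _ => by ring : ∀ i ∈ range j,
      (t:ℝ)^i * (j.choose i : ℝ) = (j.choose i : ℝ) * (t:ℝ)^i)]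
    ring
  have hPQ : P - Q = ∑ i ∈ range j, (j.choose i : ℝ) * ∑ t ∈ range N, (t:ℝ)^i * (1/2:ℝ)^t := by
    rw [hP, hQ, ← Finset.sum_sub_distrib]
    have h1 : ∀ t ∈ range N, ((t : ℝ) + 1) ^ j * (1/2:ℝ)^t - (t : ℝ) ^ j * (1/2:ℝ)^t
        = ∑ i ∈ range j, (j.choose i : ℝ) * ((t:ℝ)^i * (1/2:ℝ)^t) := by
      intro t _
      rw [← sub_mul, hbinom t, sum_mul]
      exact sum_congr rfl fun i _ => by ring
    rw [Finset.sum_congr rfl h1, Finset.sum_comm]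
    exact sum_congr rfl fun i _ => by rw [mul_sum]
  have hstep : P - Q ≤ 1 + ∑ i ∈ range j, (j.choose i : ℝ) * (2 ^ i * (Nat.factorial i)) := by
    rw [hPQ]
    have h1 : ∀ i ∈ range j, (j.choose i : ℝ) * ∑ t ∈ range N, (t:ℝ)^i * (1/2:ℝ)^t
        ≤ (j.choose i : ℝ) * ((0:ℝ)^i + 2 ^ i * (Nat.factorial i)) := by
      intro i hi
      exact mul_le_mul_of_nonneg_left (aux i (mem_range.mp hi) N) (by positivity)
    have h2 := Finset.sum_le_sum h1
    have h3 : ∑ i ∈ range j, (j.choose i : ℝ) * ((0:ℝ)^i + 2 ^ i * (Nat.factorial i))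
        = (∑ i ∈ range j, (j.choose i : ℝ) * (0:ℝ)^i)
          + ∑ i ∈ range j, (j.choose i : ℝ) * (2 ^ i * (Nat.factorial i)) := by
      rw [← Finset.sum_add_distrib]
      exact sum_congr rfl fun i _ => by ring
    have h4 : ∑ i ∈ range j, (j.choose i : ℝ) * (0:ℝ)^i = 1 := by
      rw [Finset.sum_eq_single_of_mem 0 (mem_range.mpr hj)]
      · norm_num
      · intro i _ hne
        rw [zero_pow hne, mul_zero]
    linarith [h2, h3.le, h3.ge]
  have hhalf_le : (1/2:ℝ) * P ≤ 1 + ∑ i ∈ range j, (j.choose i : ℝ) * (2 ^ i * (Nat.factorial i)) := by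
    have : (1/2:ℝ) * P = P - Q - (N : ℝ) ^ j * (1/2 : ℝ) ^ N := by linarith
    linarith
  have hfinal : P ≤ 2 + ∑ i ∈ range j, (j.choose i : ℝ) * 2 ^ (i+1) * (Nat.factorial i) := by
    have h5 : ∑ i ∈ range j, (j.choose i : ℝ) * 2 ^ (i+1) * (Nat.factorial i)
        = 2 * ∑ i ∈ range j, (j.choose i : ℝ) * (2 ^ i * (Nat.factorial i)) := by
      rw [mul_sum]
      refine sum_congr rfl fun i _ => ?_
      rw [pow_succ]
      ring
    rw [h5]
    linarith
  calc P ≤ 2 + ∑ i ∈ range j, (j.choose i : ℝ) * 2 ^ (i+1) * (Nat.factorial i) := hfinal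
    _ ≤ 2 ^ (j + 1) * (Nat.factorial j) := arith_bound j hj

lemma tsum_bound (j : ℕ) :
    ∑' t : ℕ, ((t : ℝ) + 1) ^ j * (1/2 : ℝ) ^ t ≤ 2 ^ (j + 1) * (Nat.factorial j) :=
  Real.tsum_le_of_sum_range_le (fun t => by positivity) (partial_bound j)

theorem stmt_17 (q : ℝ) (hq : 2 ≤ q) (n j : ℕ) (hn : 1 ≤ n) :
    |(q ^ n / (n : ℝ) ^ (j + 1)) * ∑ k ∈ Finset.Icc 1 (n - 1), (k : ℝ) ^ j / q ^ k -
        (q ^ (n - 1) / (n : ℝ) ^ (j + 1)) *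
          ∑ i ∈ Finset.range (j + 1),
            (-1 : ℝ) ^ (j - i) * (Nat.factorial i) * (stirling2 j i) *
              (q / (q - 1)) ^ (i + 1)| ≤
      2 ^ (j + 1) * (Nat.factorial j) / n := by
  have hq0 : (0:ℝ) < q := by linarith
  have hq1 : (1:ℝ) < q := by linarith
  have hqne : q ≠ 0 := ne_of_gt hq0
  have hnn : 0 < n := hn
  have hn0 : (0:ℝ) < (n:ℝ) := by exact_mod_cast hnn
  set x : ℝ := q⁻¹ with hxdef
  have hx0 : 0 < x := inv_pos.mpr hq0
  have hx1 : x < 1 := by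
    rw [hxdef]
    exact inv_lt_one_of_one_lt₀ hq1
  have hxh : x ≤ 1/2 := by
    rw [hxdef, show (1/2:ℝ) = 2⁻¹ by norm_num]
    exact inv_anti₀ (by norm_num) hq
  have hu : 1/(1-x) = q/(q-1) := by
    rw [hxdef]
    have h1 : (1:ℝ) - q⁻¹ = (q-1)/q := by field_simp
    rw [h1, one_div_div]
  have hsum := hasSum_aux j hx0 hx1
  rw [hu] at hsum
  have hsummable := hsum.summable
  have hdecomp := Summable.sum_add_tsum_nat_add (f := fun t : ℕ => ((t:ℝ)+1)^j * x^t) (n-1) hsummable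
  rw [hsum.tsum_eq] at hdecomp
  set S := ∑ t ∈ range (n-1), ((t:ℝ)+1)^j * x^t with hS
  set T := ∑' t : ℕ, ((↑(t+(n-1)):ℝ)+1)^j * x^(t+(n-1)) with hT
  have hsum1 : ∑ k ∈ Finset.Icc 1 (n-1), (k:ℝ)^j / q^k = x * S := by
    have hIcc : Finset.Icc 1 (n-1) = Finset.Ico 1 n := by
      rw [← Finset.Ico_add_one_right_eq_Icc]
      congr 1
      omega
    rw [hIcc, Finset.sum_Ico_eq_sum_range, hS, mul_sum]
    refine sum_congr rfl fun t _ => ?_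
    have e : ((1+t:ℕ):ℝ) = (t:ℝ)+1 := by push_cast; ring
    rw [e, hxdef]
    rw [inv_pow]
    field_simp
    rw [pow_add, pow_one]
  have hT0 : (0:ℝ) ≤ T := tsum_nonneg fun t => by positivity
  set W := ∑' t : ℕ, ((t:ℝ) + (n:ℝ))^j * x^t with hWdef
  have hW : T = x^(n-1) * W := by
    rw [hWdef, ← tsum_mul_left, hT]
    refine tsum_congr fun t => ?_
    have hc : (((n:ℕ) - 1 : ℕ) : ℝ) = (n:ℝ) - 1 := by
      rw [Nat.cast_sub hn]
      norm_num
    have e : ((t+(n-1) : ℕ) : ℝ) + 1 = (t:ℝ) + n := by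
      push_cast [hc]
      ring
    rw [e, pow_add]
    ring
  have hW0 : (0:ℝ) ≤ W := tsum_nonneg fun t => by positivity
  have hWle : W ≤ (n:ℝ)^j * (2^(j+1) * (Nat.factorial j)) := by
    have s1 := summable_aux j n hx0 hx1
    have s2' := (summable_aux j 1 (x := 1/2) (by norm_num) (by norm_num)).mul_left ((n:ℝ)^j)
    have s2 : Summable (fun t : ℕ => (n:ℝ)^j * (((t:ℝ)+1)^j * (1/2:ℝ)^t)) := by
      refine s2'.congr fun t => ?_
      norm_num
    have hle1 : ∀ t : ℕ, ((t:ℝ)+(n:ℝ))^j * x^t ≤ (n:ℝ)^j * (((t:ℝ)+1)^j * (1/2:ℝ)^t) := by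
      intro t
      have ht0 : (0:ℝ) ≤ t := Nat.cast_nonneg t
      have hn1 : (1:ℝ) ≤ n := by exact_mod_cast hn
      have hb : (t:ℝ) + n ≤ (n:ℝ) * ((t:ℝ)+1) := by nlinarith
      calc ((t:ℝ)+n)^j * x^t ≤ ((n:ℝ)*((t:ℝ)+1))^j * x^t :=
            mul_le_mul_of_nonneg_right (pow_le_pow_left₀ (by positivity) hb j) (by positivity)
        _ ≤ ((n:ℝ)*((t:ℝ)+1))^j * (1/2:ℝ)^t :=
            mul_le_mul_of_nonneg_left (pow_le_pow_left₀ hx0.le hxh t) (by positivity)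
        _ = (n:ℝ)^j * (((t:ℝ)+1)^j * (1/2:ℝ)^t) := by rw [mul_pow]; ring
    have h6 := Summable.tsum_le_tsum hle1 s1 s2
    have h7 : ∑' t : ℕ, (n:ℝ)^j * (((t:ℝ)+1)^j * (1/2:ℝ)^t)
        = (n:ℝ)^j * ∑' t : ℕ, ((t:ℝ)+1)^j * (1/2:ℝ)^t := tsum_mul_left
    have h8 := tsum_bound j
    have h9 : (n:ℝ)^j * ∑' t : ℕ, ((t:ℝ)+1)^j * (1/2:ℝ)^t
        ≤ (n:ℝ)^j * (2^(j+1) * (Nat.factorial j)) :=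
      mul_le_mul_of_nonneg_left h8 (by positivity)
    rw [hWdef]
    calc ∑' t : ℕ, ((t:ℝ) + (n:ℝ))^j * x^t
        ≤ ∑' t : ℕ, (n:ℝ)^j * (((t:ℝ)+1)^j * (1/2:ℝ)^t) := h6
      _ = (n:ℝ)^j * ∑' t : ℕ, ((t:ℝ)+1)^j * (1/2:ℝ)^t := h7
      _ ≤ (n:ℝ)^j * (2^(j+1) * (Nat.factorial j)) := h9
  have hqn : q^(n-1) * q = q^n := by
    rw [← pow_succ]
    congr 1
    omega
  have hqx : q ^ n * x = q ^ (n-1) := by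
    rw [hxdef, ← hqn]
    field_simp
  rw [hsum1, ← hdecomp]
  have key : q ^ n / (n:ℝ)^(j+1) * (x * S) - q^(n-1)/(n:ℝ)^(j+1) * (S + T)
      = -(q^(n-1) * T / (n:ℝ)^(j+1)) := by
    linear_combination (S / (n:ℝ)^(j+1)) * hqx
  rw [key, abs_neg, abs_of_nonneg (by
    apply div_nonneg _ (by positivity)
    exact mul_nonneg (by positivity) hT0)]
  have hqx1 : q^(n-1) * x^(n-1) = 1 := by
    rw [hxdef, ← mul_pow, mul_inv_cancel₀ hqne, one_pow]
  have hnj : ((n:ℝ)^j) ≠ 0 := by positivity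
  calc q^(n-1) * T / (n:ℝ)^(j+1)
      = W / (n:ℝ)^(j+1) := by rw [hW, ← mul_assoc, hqx1, one_mul]
    _ ≤ ((n:ℝ)^j * (2^(j+1) * (Nat.factorial j))) / (n:ℝ)^(j+1) := by
        exact (div_le_div_iff_of_pos_right (by positivity)).mpr hWle
    _ = 2^(j+1) * (Nat.factorial j) / n := by
        have hne : (n:ℝ) ≠ 0 := ne_of_gt hn0
        field_simp
        ring
end
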